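/- Let n ≥ 1 and 0 ≤ s ≤ n be integers, set m := n − s, and let c' > 0. Then there exist constants C > 0 and a₀ > 0 such that for all 0 < a < a₀: ∫_{{y ∈ ℝ^{2n} : √(2a) − c'·a^{3/2} ≤ ‖y‖ ≤ √(2a) + c'·a^{3/2}}} a^{−m} ‖y‖^{−2s} dλ(y) ≤ C·a. -/

import Mathlib

open MeasureTheory Metric Set

/-- Mean-value-type bound for differences of powers. -/
lemma aux_pow_sub_pow_le {x y : ℝ} (k : ℕ) (hy : 0 ≤ y) (hxy : y ≤ x) :
    x ^ k - y ^ k ≤ k * x ^ (k - 1) * (x - y) := by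
  induction k with
  | zero => simp
  | succ k ih =>
    have hx : 0 ≤ x := hy.trans hxy
    have h2 : y ^ k ≤ x ^ k := pow_le_pow_left₀ hy hxy k
    rcases Nat.eq_zero_or_pos k with rfl | hk
    · simp
    have h3 : x * x ^ (k - 1) = x ^ k := by
      rw [← pow_succ']
      congr 1
      omega
    have step : x ^ (k + 1) - y ^ (k + 1) = x * (x ^ k - y ^ k) + (x - y) * y ^ k := by
      rw [pow_succ, pow_succ]; ring
    have hb1 : x * (x ^ k - y ^ k) ≤ (k : ℝ) * x ^ k * (x - y) := by
      calc x * (x ^ k - y ^ k) ≤ x * ((k : ℝ) * x ^ (k - 1) * (x - y)) :=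
            mul_le_mul_of_nonneg_left ih hx
        _ = (k : ℝ) * (x * x ^ (k - 1)) * (x - y) := by ring
        _ = (k : ℝ) * x ^ k * (x - y) := by rw [h3]
    have hb2 : (x - y) * y ^ k ≤ (x - y) * x ^ k :=
      mul_le_mul_of_nonneg_left h2 (sub_nonneg.2 hxy)
    have : x ^ (k + 1) - y ^ (k + 1) ≤ ((k : ℝ) + 1) * x ^ k * (x - y) := by
      rw [step]; nlinarith
    simpa [Nat.add_sub_cancel] using this

set_option maxHeartbeats 1000000 in
/-- The thin-annulus estimate from the proof of Proposition 5.4. -/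
theorem stmt_16 (n s : ℕ) (hn : 1 ≤ n) (hs : s ≤ n) (m : ℕ) (hm : m = n - s)
    (c' : ℝ) (hc' : 0 < c') :
    ∃ C a₀ : ℝ, 0 < C ∧ 0 < a₀ ∧ ∀ a : ℝ, 0 < a → a < a₀ →
      ∫⁻ y in {y : EuclideanSpace ℝ (Fin (2 * n)) |
          Real.sqrt (2 * a) - c' * a ^ ((3 : ℝ) / 2) ≤ ‖y‖ ∧
          ‖y‖ ≤ Real.sqrt (2 * a) + c' * a ^ ((3 : ℝ) / 2)},
        ENNReal.ofReal ((a ^ m)⁻¹ * (‖y‖ ^ (2 * s))⁻¹)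
      ≤ ENNReal.ofReal (C * a) := by
  set E := EuclideanSpace ℝ (Fin (2 * n))
  haveI : NeZero (2 * n) := ⟨by omega⟩
  haveI : Nontrivial E := inferInstance
  set V : ℝ := (volume (ball (0 : E) 1)).toReal with hV
  have hV0 : 0 ≤ V := ENNReal.toReal_nonneg
  set K : ℝ := 4 * n * c' * (2 * Real.sqrt 2) ^ (2 * n - 1) with hK
  have hK0 : 0 ≤ K := by
    have : (0:ℝ) ≤ (2 * Real.sqrt 2) ^ (2 * n - 1) :=
      pow_nonneg (by positivity) _
    positivity
  refine ⟨2 ^ s * V * K + 1, min 1 (1 / (2 * c')), by positivity, by positivity, ?_⟩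
  intro a ha haa
  set u : ℝ := Real.sqrt a with hu
  have hu0 : 0 < u := Real.sqrt_pos.2 ha
  have hu2 : u ^ 2 = a := Real.sq_sqrt ha.le
  have h32 : a ^ ((3 : ℝ) / 2) = u ^ 3 := by
    rw [show ((3 : ℝ) / 2) = (1 / 2) * ((3 : ℕ) : ℝ) by norm_num,
      Real.rpow_mul ha.le, Real.rpow_natCast, ← Real.sqrt_eq_rpow]
  have hsq2 : Real.sqrt (2 * a) = Real.sqrt 2 * u := Real.sqrt_mul (by norm_num) a
  have hca : c' * a ≤ 1 / 2 := by
    have h1 : a ≤ 1 / (2 * c') := le_of_lt (lt_of_lt_of_le haa (min_le_right _ _))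
    have := mul_le_mul_of_nonneg_left h1 hc'.le
    calc c' * a ≤ c' * (1 / (2 * c')) := this
      _ = 1 / 2 := by field_simp
  have hthin : c' * u ^ 3 ≤ Real.sqrt 2 / 2 * u := by
    have h1 : (1 : ℝ) ≤ Real.sqrt 2 := by
      rw [show (1:ℝ) = Real.sqrt 1 by simp]
      exact Real.sqrt_le_sqrt (by norm_num)
    have : c' * u ^ 3 = (c' * a) * u := by rw [← hu2]; ring
    rw [this]
    have : (c' * a) * u ≤ (1 / 2) * u := by
      exact mul_le_mul_of_nonneg_right hca hu0.le
    nlinarith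
  set r₁ : ℝ := Real.sqrt (2 * a) - c' * a ^ ((3 : ℝ) / 2) with hr₁def
  set r₂ : ℝ := Real.sqrt (2 * a) + c' * a ^ ((3 : ℝ) / 2) with hr₂def
  have hr₁u : Real.sqrt 2 / 2 * u ≤ r₁ := by
    rw [hr₁def, hsq2, h32]; nlinarith
  have hr₁0 : 0 ≤ r₁ := le_trans (by positivity) hr₁u
  have hr₁₂ : r₁ ≤ r₂ := by
    rw [hr₁def, hr₂def]
    have : 0 ≤ c' * a ^ ((3:ℝ)/2) := by positivity
    linarith
  have hr₂0 : 0 ≤ r₂ := hr₁0.trans hr₁₂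
  have hr₂u : r₂ ≤ 2 * Real.sqrt 2 * u := by
    rw [hr₂def, hsq2, h32]
    nlinarith [Real.sqrt_nonneg 2]
  set S : Set E := {y : E | r₁ ≤ ‖y‖ ∧ ‖y‖ ≤ r₂} with hSdef
  have hS : MeasurableSet S := by
    have : S = (fun y : E => ‖y‖) ⁻¹' (Set.Icc r₁ r₂) := rfl
    rw [this]
    exact measurable_norm measurableSet_Icc
  -- bound the integrand on S
  have han : (a : ℝ) ^ n ≠ 0 := pow_ne_zero _ ha.ne'
  have hbound : ∀ y ∈ S, ENNReal.ofReal ((a ^ m)⁻¹ * (‖y‖ ^ (2 * s))⁻¹)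
      ≤ ENNReal.ofReal (2 ^ s * (a ^ n)⁻¹) := by
    intro y hy
    apply ENNReal.ofReal_le_ofReal
    have hnorm : Real.sqrt 2 / 2 * u ≤ ‖y‖ := le_trans hr₁u hy.1
    have hnsq : a / 2 ≤ ‖y‖ ^ 2 := by
      nlinarith [Real.sq_sqrt (show (0:ℝ) ≤ 2 by norm_num), Real.sqrt_nonneg 2]
    have hpow : (a / 2) ^ s ≤ ‖y‖ ^ (2 * s) := by
      rw [show 2 * s = s * 2 by ring, pow_mul' ]
      exact pow_le_pow_left₀ (by positivity) hnsq s
    have hpos : (0:ℝ) < (a / 2) ^ s := by positivity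
    calc (a ^ m)⁻¹ * (‖y‖ ^ (2 * s))⁻¹
        ≤ (a ^ m)⁻¹ * ((a / 2) ^ s)⁻¹ := by
          apply mul_le_mul_of_nonneg_left _ (by positivity)
          exact inv_anti₀ hpos hpow
      _ = 2 ^ s * (a ^ n)⁻¹ := by
          rw [show n = m + s by omega]
          rw [div_pow, pow_add]
          field_simp
  -- measure of the annulus
  set W : ENNReal := volume (ball (0 : E) 1) with hW
  have hWtop : W ≠ ⊤ := measure_ball_lt_top.ne
  have hWV : W = ENNReal.ofReal V := (ENNReal.ofReal_toReal hWtop).symm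
  have hsub : S ⊆ closedBall (0 : E) r₂ := fun y hy => by
    rw [mem_closedBall_zero_iff]; exact hy.2
  have hdisj : Disjoint S (ball (0 : E) r₁) := by
    rw [Set.disjoint_left]
    intro y hyS hyB
    rw [mem_ball_zero_iff] at hyB
    exact absurd hyS.1 (not_le.2 hyB)
  have hUnion : volume S + volume (ball (0 : E) r₁) ≤ volume (closedBall (0 : E) r₂) := by
    rw [← measure_union hdisj measurableSet_ball]
    apply measure_mono
    exact Set.union_subset hsub (ball_subset_closedBall.trans (closedBall_subset_closedBall hr₁₂))
  have hfr : Module.finrank ℝ E = 2 * n := finrank_euclideanSpace_fin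
  have hmeas : volume S ≤ ENNReal.ofReal (r₂ ^ (2 * n) - r₁ ^ (2 * n)) * W := by
    have h2 : volume S ≤ volume (closedBall (0 : E) r₂) - volume (ball (0 : E) r₁) :=
      ENNReal.le_sub_of_add_le_right (measure_ball_lt_top).ne hUnion
    rw [Measure.addHaar_closedBall _ _ hr₂0, Measure.addHaar_ball _ _ hr₁0, hfr] at h2
    refine h2.trans (le_of_eq ?_)
    rw [ENNReal.ofReal_sub _ (pow_nonneg hr₁0 _)]
    exact (ENNReal.sub_mul (fun _ _ => hWtop)).symm
  -- put it all together
  have hΔ0 : 0 ≤ r₂ ^ (2 * n) - r₁ ^ (2 * n) :=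
    sub_nonneg.2 (pow_le_pow_left₀ hr₁0 hr₁₂ _)
  have hΔ : r₂ ^ (2 * n) - r₁ ^ (2 * n) ≤ K * a ^ (n + 1) := by
    have h1 : r₂ ^ (2 * n) - r₁ ^ (2 * n) ≤ (2 * n : ℕ) * r₂ ^ (2 * n - 1) * (r₂ - r₁) :=
      aux_pow_sub_pow_le (2 * n) hr₁0 hr₁₂
    have h2 : r₂ - r₁ = 2 * (c' * u ^ 3) := by rw [hr₂def, hr₁def, h32]; ring
    have h3 : r₂ ^ (2 * n - 1) ≤ (2 * Real.sqrt 2) ^ (2 * n - 1) * u ^ (2 * n - 1) := by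
      rw [← mul_pow]
      exact pow_le_pow_left₀ hr₂0 hr₂u _
    have hupos : (0:ℝ) ≤ u ^ (2 * n - 1) := by positivity
    have h4 : u ^ (2 * n - 1) * u ^ 3 = a ^ (n + 1) := by
      rw [← pow_add, show 2 * n - 1 + 3 = (n + 1) * 2 by omega, pow_mul, ← hu2]; ring
    calc r₂ ^ (2 * n) - r₁ ^ (2 * n)
        ≤ (2 * n : ℕ) * r₂ ^ (2 * n - 1) * (r₂ - r₁) := h1
      _ = (2 * n : ℝ) * r₂ ^ (2 * n - 1) * (2 * (c' * u ^ 3)) := by rw [h2]; push_cast; ring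
      _ ≤ (2 * n : ℝ) * ((2 * Real.sqrt 2) ^ (2 * n - 1) * u ^ (2 * n - 1)) *
            (2 * (c' * u ^ 3)) := by
          apply mul_le_mul_of_nonneg_right _ (by positivity)
          exact mul_le_mul_of_nonneg_left h3 (by positivity)
      _ = K * (u ^ (2 * n - 1) * u ^ 3) := by rw [hK]; ring
      _ = K * a ^ (n + 1) := by rw [h4]
  have hreal : 2 ^ s * (a ^ n)⁻¹ * ((r₂ ^ (2 * n) - r₁ ^ (2 * n)) * V)
      ≤ (2 ^ s * V * K + 1) * a := by
    have h5 : (a ^ n)⁻¹ * a ^ (n + 1) = a := by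
      rw [pow_succ]; field_simp
    calc 2 ^ s * (a ^ n)⁻¹ * ((r₂ ^ (2 * n) - r₁ ^ (2 * n)) * V)
        ≤ 2 ^ s * (a ^ n)⁻¹ * ((K * a ^ (n + 1)) * V) := by
          apply mul_le_mul_of_nonneg_left _ (by positivity)
          exact mul_le_mul_of_nonneg_right hΔ hV0
      _ = 2 ^ s * V * K * ((a ^ n)⁻¹ * a ^ (n + 1)) := by ring
      _ = 2 ^ s * V * K * a := by rw [h5]
      _ ≤ (2 ^ s * V * K + 1) * a := by nlinarith
  calc ∫⁻ y in S, ENNReal.ofReal ((a ^ m)⁻¹ * (‖y‖ ^ (2 * s))⁻¹)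
      ≤ ∫⁻ _ in S, ENNReal.ofReal (2 ^ s * (a ^ n)⁻¹) := setLIntegral_mono' hS hbound
    _ = ENNReal.ofReal (2 ^ s * (a ^ n)⁻¹) * volume S := setLIntegral_const _ _
    _ ≤ ENNReal.ofReal (2 ^ s * (a ^ n)⁻¹) *
          (ENNReal.ofReal (r₂ ^ (2 * n) - r₁ ^ (2 * n)) * W) :=
        mul_le_mul_right hmeas _
    _ = ENNReal.ofReal (2 ^ s * (a ^ n)⁻¹ * ((r₂ ^ (2 * n) - r₁ ^ (2 * n)) * V)) := by
        rw [hWV, ← ENNReal.ofReal_mul hΔ0, ← ENNReal.ofReal_mul (by positivity)]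
    _ ≤ ENNReal.ofReal ((2 ^ s * V * K + 1) * a) := ENNReal.ofReal_le_ofReal hreal
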